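/- Let G=(V,E) have maximal degree Δ and consider Bernoulli(p₀) site percolation on V with p₀(Δ−1) < 1. For an edge (u,v)∈E with both endpoints forced open, let C(u,v) be the open cluster containing {u,v}. Then for every m ≥ 2, P(|C(u,v)| ≥ m) ≤ (2/(1−e^{−ξ_*}))·((1−p₀)/(p₀(Δ−2)))²·e^{−ξ_* m}, where ξ_* = log((Δ−2)^{Δ−2}/(p₀(Δ−1)^{Δ−1}(1−p₀)^{Δ−2})). -/

import Mathlib

open MeasureTheory ProbabilityTheory

/-- The open cluster of the vertex `u` in site percolation: all vertices reachable from
`u` through edges of `G` both of whose endpoints are open in `η`. -/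
def openCluster {V : Type*} (G : SimpleGraph V) (η : V → Bool) (u : V) : Set V :=
  {w | (SimpleGraph.fromRel
    (fun a b => G.Adj a b ∧ η a = true ∧ η b = true)).Reachable u w}

set_option linter.unusedSectionVars false

section PercoAux
variable {V : Type*} [Fintype V] [DecidableEq V] (G : SimpleGraph V) [DecidableRel G.Adj]

def pw (p : ℝ) (g : V → Bool) : ℝ := ∏ w, (if g w then p else 1 - p)

lemma sum_pair (x : V) (F : (V → Bool) → ℝ) :
    ∑ g : V → Bool, F g
      = ∑ g ∈ Finset.univ.filter (fun g : V → Bool => g x = true),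
          (F g + F (Function.update g x false)) := by
  rw [← Finset.sum_filter_add_sum_filter_not Finset.univ (fun g : V → Bool => g x = true)]
  rw [Finset.sum_add_distrib]
  congr 1
  refine Finset.sum_nbij' (fun g => Function.update g x true)
    (fun g => Function.update g x false) ?_ ?_ ?_ ?_ ?_ <;>
    intro g hg <;> simp only [Finset.mem_filter, Finset.mem_univ, true_and,
      Bool.not_eq_true] at hg ⊢
  · simp
  · simp
  · funext y; by_cases h : y = x
    · subst h; simp [hg]
    · simp [Function.update_of_ne h]
  · funext y; by_cases h : y = x
    · subst h; simp [hg]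
    · simp [Function.update_of_ne h]
  · congr 1
    funext y; by_cases h : y = x
    · subst h; simp [hg]
    · simp [Function.update_of_ne h]

lemma pw_factor (p : ℝ) (x : V) (g : V → Bool) :
    pw p g = (if g x then p else 1 - p) * ∏ w ∈ Finset.univ.erase x, (if g w then p else 1 - p) := by
  rw [pw, ← Finset.mul_prod_erase Finset.univ _ (Finset.mem_univ x)]

lemma pw0_update (p : ℝ) (x : V) (g : V → Bool) (b : Bool) :
    ∏ w ∈ Finset.univ.erase x, (if (Function.update g x b) w then p else 1 - p)
      = ∏ w ∈ Finset.univ.erase x, (if g w then p else 1 - p) := by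
  refine Finset.prod_congr rfl fun w hw => ?_
  rw [Function.update_of_ne (Finset.ne_of_mem_erase hw)]

lemma key_split (p : ℝ) (x : V) (A B : (V → Bool) → ℝ)
    (hA : ∀ g b, A (Function.update g x b) = A g)
    (hB : ∀ g b, B (Function.update g x b) = B g) :
    ∑ g : V → Bool, pw p g * (if g x then A g else B g)
      = p * (∑ g : V → Bool, pw p g * A g)
        + (1 - p) * (∑ g : V → Bool, pw p g * B g) := by
  rw [sum_pair x (fun g => pw p g * (if g x then A g else B g)),
    sum_pair x (fun g => pw p g * A g), sum_pair x (fun g => pw p g * B g),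
    Finset.mul_sum, Finset.mul_sum, ← Finset.sum_add_distrib]
  refine Finset.sum_congr rfl fun g hg => ?_
  simp only [Finset.mem_filter, Finset.mem_univ, true_and] at hg
  have hgu : Function.update g x false x = false := by simp
  rw [pw_factor p x g, pw_factor p x (Function.update g x false), hgu, pw0_update,
    hA g false, hB g false, hg]
  simp only [Bool.false_eq_true, if_true, if_false]
  ring

/-- binomial tail recursion -/
def bt (p : ℝ) : ℕ → ℕ → ℝ
  | _, 0 => 1
  | 0, _+1 => 0
  | M+1, t+1 => p * bt p M t + (1-p) * bt p M (t+1)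

lemma bt_nonneg {p : ℝ} (hp0 : 0 ≤ p) (hp1 : p ≤ 1) : ∀ M t, 0 ≤ bt p M t
  | _, 0 => by simp [bt]
  | 0, _+1 => by simp [bt]
  | M+1, t+1 => by
      have h1 := bt_nonneg hp0 hp1 M t
      have h2 := bt_nonneg hp0 hp1 M (t+1)
      simp only [bt]
      nlinarith

lemma bt_le_chernoff {p x : ℝ} (hp0 : 0 ≤ p) (hp1 : p ≤ 1) (hx : 1 ≤ x) :
    ∀ M t, bt p M t ≤ (1/x)^t * (1 - p + p * x)^M
  | M, 0 => by
      have h1 : (1:ℝ) ≤ 1 - p + p * x := by nlinarith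
      have : (1:ℝ) ≤ (1 - p + p * x)^M := one_le_pow₀ h1
      simpa [bt] using this
  | 0, t+1 => by
      have hx0 : (0:ℝ) < x := by linarith
      have : (0:ℝ) ≤ (1/x)^(t+1) := by positivity
      simpa [bt] using this
  | M+1, t+1 => by
      have h1 := bt_le_chernoff hp0 hp1 hx M t
      have h2 := bt_le_chernoff hp0 hp1 hx M (t+1)
      have hx0 : (0:ℝ) < x := by linarith
      have key : (1/x)^(t+1) * (1-p+p*x)^(M+1)
          = p * ((1/x)^t * (1-p+p*x)^M) + (1-p) * ((1/x)^(t+1) * (1-p+p*x)^M) := by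
        rw [pow_succ, pow_succ]
        have hx' : x * (1/x) = 1 := mul_one_div_cancel hx0.ne'
        linear_combination ((1/x)^t * (1-p+p*x)^M * p) * hx'
      simp only [bt]
      rw [key]
      have hq : (0:ℝ) ≤ 1 - p := by linarith
      nlinarith

noncomputable def expl : ℕ → ℕ → List V → Finset V → (V → Bool) → Bool
  | _, 0, _, _, _ => true
  | _, _+1, List.nil, _, _ => false
  | 0, t+1, x :: rest, sn, η =>
      if x ∈ sn then expl 0 (t+1) rest sn η else false
  | M+1, t+1, x :: rest, sn, η =>
      if x ∈ sn then expl (M+1) (t+1) rest sn η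
      else if η x then expl M t (rest ++ (G.neighborFinset x).toList) (insert x sn) η
      else expl M (t+1) rest (insert x sn) η
termination_by M _ ag => (M, ag.length)

@[simp] lemma expl_t0 (M : ℕ) (ag : List V) (sn : Finset V) (η : V → Bool) :
    expl G M 0 ag sn η = true := expl.eq_1 G M ag sn η

@[simp] lemma expl_nil (M t : ℕ) (sn : Finset V) (η : V → Bool) :
    expl G M (t+1) List.nil sn η = false := expl.eq_2 G M sn η t

lemma expl_M0 (t : ℕ) (x : V) (rest : List V) (sn : Finset V) (η : V → Bool) :
    expl G 0 (t+1) (x :: rest) sn η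
      = if x ∈ sn then expl G 0 (t+1) rest sn η else false := by rw [expl.eq_3]

lemma expl_cons (M t : ℕ) (x : V) (rest : List V) (sn : Finset V) (η : V → Bool) :
    expl G (M+1) (t+1) (x :: rest) sn η
      = if x ∈ sn then expl G (M+1) (t+1) rest sn η
        else if η x then expl G M t (rest ++ (G.neighborFinset x).toList) (insert x sn) η
        else expl G M (t+1) rest (insert x sn) η := by rw [expl.eq_4]

theorem expl_indep : ∀ (M t : ℕ) (ag : List V) (sn : Finset V) (η : V → Bool) (z : V)
    (b : Bool), z ∈ sn →
    expl G M t ag sn (Function.update η z b) = expl G M t ag sn η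
  | M, 0, ag, sn, η, z, b, hz => by simp
  | M, t+1, List.nil, sn, η, z, b, hz => by simp
  | 0, t+1, x :: rest, sn, η, z, b, hz => by
      rw [expl_M0, expl_M0]
      by_cases hx : x ∈ sn
      · rw [if_pos hx, if_pos hx, expl_indep 0 (t+1) rest sn η z b hz]
      · rw [if_neg hx, if_neg hx]
  | M+1, t+1, x :: rest, sn, η, z, b, hz => by
      rw [expl_cons, expl_cons]
      by_cases hx : x ∈ sn
      · rw [if_pos hx, if_pos hx, expl_indep (M+1) (t+1) rest sn η z b hz]
      · have hxz : x ≠ z := fun h => hx (h ▸ hz)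
        rw [if_neg hx, if_neg hx, Function.update_of_ne hxz]
        have hz' : z ∈ insert x sn := Finset.mem_insert_of_mem hz
        by_cases hηx : η x = true
        · rw [if_pos hηx, if_pos hηx, expl_indep M t _ _ η z b hz']
        · rw [if_neg hηx, if_neg hηx, expl_indep M (t+1) rest _ η z b hz']
termination_by M _ ag => (M, ag.length)

def hatf (u v : V) (g : V → Bool) : V → Bool :=
  Function.update (Function.update g u true) v true

lemma hatf_update (u v x : V) (hxu : x ≠ u) (hxv : x ≠ v) (g : V → Bool) (b : Bool) :
    hatf u v (Function.update g x b) = Function.update (hatf u v g) x b := by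
  unfold hatf
  rw [Function.update_comm hxu, Function.update_comm hxv]

theorem sum_expl_le (p : ℝ) (hp0 : 0 ≤ p) (hp1 : p ≤ 1) (u v : V)
    (hsum : ∑ g : V → Bool, pw p g = 1) :
    ∀ (M t : ℕ) (ag : List V) (sn : Finset V), u ∈ sn → v ∈ sn →
    (∑ g : V → Bool, pw p g * (if expl G M t ag sn (hatf u v g) = true then 1 else 0))
      ≤ bt p M t
  | M, 0, ag, sn, hu, hv => by
      simp only [expl_t0, if_true, mul_one, hsum]
      simp [bt]
  | M, t+1, List.nil, sn, hu, hv => by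
      simp only [expl_nil, Bool.false_eq_true, if_false, mul_zero, Finset.sum_const_zero]
      exact bt_nonneg hp0 hp1 M (t+1)
  | 0, t+1, x :: rest, sn, hu, hv => by
      by_cases hx : x ∈ sn
      · simp only [expl_M0, if_pos hx]
        exact sum_expl_le p hp0 hp1 u v hsum 0 (t+1) rest sn hu hv
      · simp only [expl_M0, if_neg hx, Bool.false_eq_true, if_false, mul_zero,
          Finset.sum_const_zero]
        exact bt_nonneg hp0 hp1 0 (t+1)
  | M+1, t+1, x :: rest, sn, hu, hv => by
      by_cases hx : x ∈ sn
      · simp only [expl_cons, if_pos hx]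
        exact sum_expl_le p hp0 hp1 u v hsum (M+1) (t+1) rest sn hu hv
      · have hxu : x ≠ u := fun h => hx (h ▸ hu)
        have hxv : x ≠ v := fun h => hx (h ▸ hv)
        have hhat : ∀ g : V → Bool, hatf u v g x = g x := by
          intro g
          unfold hatf
          rw [Function.update_of_ne hxv, Function.update_of_ne hxu]
        set A : (V → Bool) → ℝ := fun g =>
          (if expl G M t (rest ++ (G.neighborFinset x).toList) (insert x sn) (hatf u v g) = true
            then 1 else 0) with hA
        set B : (V → Bool) → ℝ := fun g =>
          (if expl G M (t+1) rest (insert x sn) (hatf u v g) = true then 1 else 0) with hB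
        have step : (∑ g : V → Bool,
              pw p g * (if expl G (M+1) (t+1) (x :: rest) sn (hatf u v g) = true then 1 else 0))
            = ∑ g : V → Bool, pw p g * (if g x then A g else B g) := by
          refine Finset.sum_congr rfl fun g _ => ?_
          rw [expl_cons, if_neg hx, hhat g]
          by_cases hgx : g x = true
          · simp [hgx, hA]
          · simp only [Bool.not_eq_true] at hgx
            simp [hgx, hB]
        have indep : ∀ (F : ℕ → ℕ → List V → (V → Bool) → ℝ), True := fun _ => trivial
        have hAind : ∀ g b, A (Function.update g x b) = A g := by
          intro g b
          simp only [hA]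
          rw [hatf_update u v x hxu hxv, expl_indep G _ _ _ _ _ x b (Finset.mem_insert_self x sn)]
        have hBind : ∀ g b, B (Function.update g x b) = B g := by
          intro g b
          simp only [hB]
          rw [hatf_update u v x hxu hxv, expl_indep G _ _ _ _ _ x b (Finset.mem_insert_self x sn)]
        rw [step, key_split p x A B hAind hBind]
        have h1 : (∑ g : V → Bool, pw p g * A g) ≤ bt p M t :=
          sum_expl_le p hp0 hp1 u v hsum M t _ (insert x sn)
            (Finset.mem_insert_of_mem hu) (Finset.mem_insert_of_mem hv)
        have h2 : (∑ g : V → Bool, pw p g * B g) ≤ bt p M (t+1) :=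
          sum_expl_le p hp0 hp1 u v hsum M (t+1) rest (insert x sn)
            (Finset.mem_insert_of_mem hu) (Finset.mem_insert_of_mem hv)
        have hq : (0:ℝ) ≤ 1 - p := by linarith
        show _ ≤ bt p (M+1) (t+1)
        simp only [bt]
        have := mul_le_mul_of_nonneg_left h1 hp0
        have := mul_le_mul_of_nonneg_left h2 hq
        linarith
termination_by M _ ag => (M, ag.length)

abbrev HG (η : V → Bool) : SimpleGraph V := SimpleGraph.fromRel
  (fun a b => G.Adj a b ∧ η a = true ∧ η b = true)

lemma HG_adj {η : V → Bool} {a b : V} (h : (HG G η).Adj a b) :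
    G.Adj a b ∧ η a = true ∧ η b = true := by
  rw [SimpleGraph.fromRel_adj] at h
  obtain ⟨hne, h | h⟩ := h
  · exact h
  · exact ⟨h.1.symm, h.2.2, h.2.1⟩

lemma walk_end_open {η : V → Bool} : ∀ {x y : V} (_ : (HG G η).Walk x y), η y = true ∨ y = x := by
  intro x y P
  induction P with
  | nil => exact Or.inr rfl
  | @cons a b c hadj P ih =>
      rcases ih with h | rfl
      · exact Or.inl h
      · exact Or.inl (HG_adj G hadj).2.2

lemma mem_openCluster_open {η : V → Bool} {u : V} (hηu : η u = true) {w : V} (hw : w ∈ openCluster G η u) :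
    η w = true := by
  obtain ⟨P⟩ := hw
  rcases walk_end_open G P with h | rfl
  · exact h
  · exact hηu

lemma walk_avoid {η : V → Bool} {a w : V} (P : (HG G η).Walk a w) : ∀ (sn : Finset V), w ∉ sn →
    ∃ y, ∃ Q : (HG G η).Walk y w, (∀ z ∈ Q.support, z ∉ sn) ∧
      ((y = a ∧ a ∉ sn) ∨ ∃ x ∈ sn, (HG G η).Adj x y) := by
  induction P with
  | nil =>
      intro sn hw
      refine ⟨_, SimpleGraph.Walk.nil, ?_, Or.inl ⟨rfl, hw⟩⟩
      intro z hz
      simp only [SimpleGraph.Walk.support_nil, List.mem_singleton] at hz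
      exact hz ▸ hw
  | @cons a b w hadj P ih =>
      intro sn hw
      obtain ⟨y, Q, hQ, hcert⟩ := ih sn hw
      rcases hcert with ⟨rfl, hb⟩ | hcert
      · by_cases ha : a ∈ sn
        · exact ⟨y, Q, hQ, Or.inr ⟨a, ha, hadj⟩⟩
        · refine ⟨a, SimpleGraph.Walk.cons hadj Q, ?_, Or.inl ⟨rfl, ha⟩⟩
          intro z hz
          rw [SimpleGraph.Walk.support_cons, List.mem_cons] at hz
          rcases hz with rfl | hz
          · exact ha
          · exact hQ z hz
      · exact ⟨y, Q, hQ, Or.inr hcert⟩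

lemma filter_toList_length (s : Finset V) (p : V → Prop) [DecidablePred p] :
    (s.toList.filter (fun z => decide (p z))).length = (s.filter p).card := by
  have hnd : (s.toList.filter (fun z => decide (p z))).Nodup :=
    s.nodup_toList.filter _
  rw [← List.toFinset_card_of_nodup hnd]
  congr 1
  ext z
  simp [List.mem_filter]

theorem expl_correct (Δ : ℕ) (hdeg : ∀ w, G.degree w ≤ Δ) (η : V → Bool) (u v : V)
    (hηu : η u = true) (hηv : η v = true) :
    ∀ (M t : ℕ) (ag : List V) (sn : Finset V),
    u ∈ sn → v ∈ sn →
    (t = 0 ∨ (Δ-1) * (t-1) + (ag.filter (fun z => z ∉ sn)).length ≤ M) →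
    t ≤ (((Set.toFinite (openCluster G η u)).toFinset) \ sn).card →
    (∀ w ∈ (Set.toFinite (openCluster G η u)).toFinset, w ∉ sn →
      ∃ a ∈ ag, a ∉ sn ∧ ∃ Q : (HG G η).Walk a w, ∀ z ∈ Q.support, z ∉ sn) →
    (∀ z ∈ ag, ∃ s ∈ sn, G.Adj s z) →
    (∀ s ∈ sn, η s = true → ∀ y, G.Adj s y → y ∈ sn ∨ y ∈ ag) →
    expl G M t ag sn η = true
  | M, 0, ag, sn, hu, hv, hA, hB, hC, hD, hF => by simp
  | M, t+1, List.nil, sn, hu, hv, hA, hB, hC, hD, hF => by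
      exfalso
      obtain ⟨w, hw⟩ := Finset.card_pos.mp (Nat.lt_of_lt_of_le (Nat.succ_pos t) hB)
      rw [Finset.mem_sdiff] at hw
      obtain ⟨a, ha, -⟩ := hC w hw.1 hw.2
      exact List.not_mem_nil ha
  | 0, t+1, x :: rest, sn, hu, hv, hA, hB, hC, hD, hF => by
      by_cases hx : x ∈ sn
      · rw [expl_M0, if_pos hx]
        refine expl_correct Δ hdeg η u v hηu hηv 0 (t+1) rest sn hu hv ?_ hB ?_ ?_ ?_
        · rcases hA with h | h
          · exact Or.inl h
          · refine Or.inr ?_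
            have : (x :: rest).filter (fun z => z ∉ sn) = rest.filter (fun z => z ∉ sn) := by
              simp [List.filter_cons, hx]
            rwa [this] at h
        · intro w hw hwsn
          obtain ⟨a, haag, hansn, Q, hQ⟩ := hC w hw hwsn
          have : a ∈ rest := by
            rcases List.mem_cons.mp haag with rfl | h
            · exact absurd hx hansn
            · exact h
          exact ⟨a, this, hansn, Q, hQ⟩
        · exact fun z hz => hD z (List.mem_cons_of_mem x hz)
        · intro s hs hηs y hy
          rcases hF s hs hηs y hy with h | h
          · exact Or.inl h
          · rcases List.mem_cons.mp h with rfl | h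
            · exact Or.inl hx
            · exact Or.inr h
      · exfalso
        rcases hA with h | h
        · exact Nat.succ_ne_zero t h
        · have : x ∈ (x :: rest).filter (fun z => z ∉ sn) := by
            simp [List.filter_cons, hx]
          have := List.length_pos_of_mem this
          omega
  | M+1, t+1, x :: rest, sn, hu, hv, hA, hB, hC, hD, hF => by
      by_cases hx : x ∈ sn
      · rw [expl_cons, if_pos hx]
        refine expl_correct Δ hdeg η u v hηu hηv (M+1) (t+1) rest sn hu hv ?_ hB ?_ ?_ ?_
        · rcases hA with h | h
          · exact Or.inl h
          · refine Or.inr ?_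
            have : (x :: rest).filter (fun z => z ∉ sn) = rest.filter (fun z => z ∉ sn) := by
              simp [List.filter_cons, hx]
            rwa [this] at h
        · intro w hw hwsn
          obtain ⟨a, haag, hansn, Q, hQ⟩ := hC w hw hwsn
          have : a ∈ rest := by
            rcases List.mem_cons.mp haag with rfl | h
            · exact absurd hx hansn
            · exact h
          exact ⟨a, this, hansn, Q, hQ⟩
        · exact fun z hz => hD z (List.mem_cons_of_mem x hz)
        · intro s hs hηs y hy
          rcases hF s hs hηs y hy with h | h
          · exact Or.inl h
          · rcases List.mem_cons.mp h with rfl | h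
            · exact Or.inl hx
            · exact Or.inr h
      · have hAr : (Δ-1) * t + ((rest.filter (fun z => z ∉ sn)).length + 1) ≤ M + 1 := by
          rcases hA with h | h
          · exact absurd h (Nat.succ_ne_zero t)
          · have : (x :: rest).filter (fun z => z ∉ sn)
                = x :: rest.filter (fun z => z ∉ sn) := by
              simp [List.filter_cons, hx]
            rw [this] at h
            simpa using h
        have hufx : u ∈ insert x sn := Finset.mem_insert_of_mem hu
        have hvfx : v ∈ insert x sn := Finset.mem_insert_of_mem hv
        have hmono : ∀ (l : List V), (l.filter (fun z => z ∉ insert x sn)).length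
            ≤ (l.filter (fun z => z ∉ sn)).length := by
          intro l
          apply List.Sublist.length_le
          apply List.monotone_filter_right
          intro z hz
          simp only [decide_eq_true_eq, Finset.mem_insert, not_or] at hz ⊢
          exact hz.2
        rw [expl_cons, if_neg hx]
        by_cases hηx : η x = true
        · rw [if_pos hηx]
          -- new agenda
          have hlen2 : (((G.neighborFinset x).toList.filter
              (fun z => z ∉ insert x sn)).length) ≤ Δ - 1 := by
            obtain ⟨s₀, hs₀, hadj₀⟩ := hD x List.mem_cons_self
            have hs₀x : s₀ ∈ G.neighborFinset x := by
              rw [SimpleGraph.mem_neighborFinset]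
              exact hadj₀.symm
            have : ((G.neighborFinset x).toList.filter
                (fun z => z ∉ insert x sn)).length
                = ((G.neighborFinset x).filter (fun z => z ∉ insert x sn)).card :=
              filter_toList_length _ _
            rw [this]
            have hsub : (G.neighborFinset x).filter (fun z => z ∉ insert x sn)
                ⊆ (G.neighborFinset x).erase s₀ := by
              intro z hz
              rw [Finset.mem_filter] at hz
              refine Finset.mem_erase.mpr ⟨?_, hz.1⟩
              rintro rfl
              exact hz.2 (Finset.mem_insert_of_mem hs₀)
            calc ((G.neighborFinset x).filter (fun z => z ∉ insert x sn)).card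
                ≤ ((G.neighborFinset x).erase s₀).card := Finset.card_le_card hsub
              _ = G.degree x - 1 := by
                  rw [Finset.card_erase_of_mem hs₀x, SimpleGraph.card_neighborFinset_eq_degree]
              _ ≤ Δ - 1 := Nat.sub_le_sub_right (hdeg x) 1
          refine expl_correct Δ hdeg η u v hηu hηv M t _ (insert x sn) hufx hvfx ?_ ?_ ?_ ?_ ?_
          · -- (A)
            rcases t with _ | t'
            · exact Or.inl rfl
            · refine Or.inr ?_
              rw [List.filter_append, List.length_append]
              have h1 := hmono rest
              have h2 := hlen2
              have hd : (Δ-1) * (t'+1) = (Δ-1) * t' + (Δ-1) := by ring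
              simp only [Nat.add_sub_cancel]
              omega
          · -- (B)
            have hsub : (Set.toFinite (openCluster G η u)).toFinset \ sn
                ⊆ insert x ((Set.toFinite (openCluster G η u)).toFinset \ insert x sn) := by
              intro z hz
              rw [Finset.mem_sdiff] at hz
              by_cases hzx : z = x
              · exact hzx ▸ Finset.mem_insert_self _ _
              · refine Finset.mem_insert_of_mem ?_
                rw [Finset.mem_sdiff, Finset.mem_insert]
                exact ⟨hz.1, fun h => h.elim hzx hz.2⟩
            have := Finset.card_le_card hsub
            have := Finset.card_insert_le x
              ((Set.toFinite (openCluster G η u)).toFinset \ insert x sn)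
            omega
          · -- (C)
            intro w hw hwsn
            have hwsn' : w ∉ sn := fun h => hwsn (Finset.mem_insert_of_mem h)
            obtain ⟨a, haag, hansn, Q, hQ⟩ := hC w hw hwsn'
            obtain ⟨y, Q', hQ', hcert⟩ := walk_avoid G Q (insert x sn) hwsn
            rcases hcert with ⟨rfl, hans'⟩ | ⟨x'', hx''m, hadj⟩
            · have : y ∈ rest := by
                rcases List.mem_cons.mp haag with rfl | h
                · exact absurd (Finset.mem_insert_self y sn) hans'
                · exact h
              exact ⟨y, List.mem_append_left _ this, hans', Q', hQ'⟩
            · have hysn : y ∉ insert x sn := hQ' y Q'.start_mem_support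
              rcases Finset.mem_insert.mp hx''m with rfl | hx''sn
              · have : y ∈ (G.neighborFinset x'').toList := by
                  rw [Finset.mem_toList, SimpleGraph.mem_neighborFinset]
                  exact (HG_adj G hadj).1
                exact ⟨y, List.mem_append_right _ this, hysn, Q', hQ'⟩
              · have hη'' := (HG_adj G hadj).2.1
                have hGadj := (HG_adj G hadj).1
                rcases hF x'' hx''sn hη'' y hGadj with h | h
                · exact absurd (Finset.mem_insert_of_mem h) hysn
                · have : y ∈ rest := by
                    rcases List.mem_cons.mp h with rfl | h
                    · exact absurd (Finset.mem_insert_self y sn) hysn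
                    · exact h
                  exact ⟨y, List.mem_append_left _ this, hysn, Q', hQ'⟩
          · -- (D)
            intro z hz
            rcases List.mem_append.mp hz with h | h
            · obtain ⟨s, hs, hadj⟩ := hD z (List.mem_cons_of_mem x h)
              exact ⟨s, Finset.mem_insert_of_mem hs, hadj⟩
            · refine ⟨x, Finset.mem_insert_self x sn, ?_⟩
              rw [Finset.mem_toList, SimpleGraph.mem_neighborFinset] at h
              exact h
          · -- (F)
            intro s hs hηs y hy
            rcases Finset.mem_insert.mp hs with rfl | hssn
            · refine Or.inr (List.mem_append_right _ ?_)
              rw [Finset.mem_toList, SimpleGraph.mem_neighborFinset]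
              exact hy
            · rcases hF s hssn hηs y hy with h | h
              · exact Or.inl (Finset.mem_insert_of_mem h)
              · rcases List.mem_cons.mp h with rfl | h
                · exact Or.inl (Finset.mem_insert_self y sn)
                · exact Or.inr (List.mem_append_left _ h)
        · rw [if_neg hηx]
          have hxC : x ∉ (Set.toFinite (openCluster G η u)).toFinset := by
            intro hmem
            rw [Set.Finite.mem_toFinset] at hmem
            exact hηx (mem_openCluster_open G hηu hmem)
          refine expl_correct Δ hdeg η u v hηu hηv M (t+1) rest (insert x sn) hufx hvfx ?_ ?_ ?_ ?_ ?_
          · refine Or.inr ?_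
            have h1 := hmono rest
            simp only [Nat.add_sub_cancel] at hAr ⊢
            omega
          · -- (B)
            have : (Set.toFinite (openCluster G η u)).toFinset \ insert x sn
                = (Set.toFinite (openCluster G η u)).toFinset \ sn := by
              ext z
              rw [Finset.mem_sdiff, Finset.mem_sdiff, Finset.mem_insert]
              constructor
              · rintro ⟨h1, h2⟩
                exact ⟨h1, fun h => h2 (Or.inr h)⟩
              · rintro ⟨h1, h2⟩
                refine ⟨h1, ?_⟩
                rintro (rfl | h)
                · exact hxC h1
                · exact h2 h
            rw [this]
            exact hB
          · -- (C)
            intro w hw hwsn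
            have hwsn' : w ∉ sn := fun h => hwsn (Finset.mem_insert_of_mem h)
            obtain ⟨a, haag, hansn, Q, hQ⟩ := hC w hw hwsn'
            obtain ⟨y, Q', hQ', hcert⟩ := walk_avoid G Q (insert x sn) hwsn
            rcases hcert with ⟨rfl, hans'⟩ | ⟨x'', hx''m, hadj⟩
            · have : y ∈ rest := by
                rcases List.mem_cons.mp haag with rfl | h
                · exact absurd (Finset.mem_insert_self y sn) hans'
                · exact h
              exact ⟨y, this, hans', Q', hQ'⟩
            · have hysn : y ∉ insert x sn := hQ' y Q'.start_mem_support
              rcases Finset.mem_insert.mp hx''m with rfl | hx''sn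
              · exact absurd (HG_adj G hadj).2.1 hηx
              · have hη'' := (HG_adj G hadj).2.1
                have hGadj := (HG_adj G hadj).1
                rcases hF x'' hx''sn hη'' y hGadj with h | h
                · exact absurd (Finset.mem_insert_of_mem h) hysn
                · have : y ∈ rest := by
                    rcases List.mem_cons.mp h with rfl | h
                    · exact absurd (Finset.mem_insert_self y sn) hysn
                    · exact h
                  exact ⟨y, this, hysn, Q', hQ'⟩
          · -- (D)
            intro z hz
            obtain ⟨s, hs, hadj⟩ := hD z (List.mem_cons_of_mem x hz)
            exact ⟨s, Finset.mem_insert_of_mem hs, hadj⟩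
          · -- (F)
            intro s hs hηs y hy
            rcases Finset.mem_insert.mp hs with rfl | hssn
            · exact absurd hηs hηx
            · rcases hF s hssn hηs y hy with h | h
              · exact Or.inl (Finset.mem_insert_of_mem h)
              · rcases List.mem_cons.mp h with rfl | h
                · exact Or.inl (Finset.mem_insert_self y sn)
                · exact Or.inr h
termination_by M _ ag => (M, ag.length)

variable {Ω : Type*} [MeasurableSpace Ω] (P : Measure Ω) [IsProbabilityMeasure P]
    (η : Ω → V → Bool) (p₀ : ℝ)
variable (hmeas : ∀ w, Measurable (fun ω => η ω w))
variable (hindep : iIndepFun (fun w ω => η ω w) P)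
variable (hopen : ∀ w, (P {ω | η ω w = true}).toReal = p₀)

include hmeas in
lemma meas_eval (w : V) (b : Bool) : MeasurableSet {ω | η ω w = b} :=
  (hmeas w) (MeasurableSet.singleton b)

include hmeas hopen in
lemma prob_false (hp : p₀ ∈ Set.Ioo (0:ℝ) 1) (w : V) :
    (P {ω | η ω w = false}).toReal = 1 - p₀ := by
  have hc : {ω | η ω w = false} = {ω | η ω w = true}ᶜ := by
    ext ω; simp [Set.mem_compl_iff]
  rw [hc, measure_compl (meas_eval (η := η) hmeas w true) (measure_ne_top P _), measure_univ]
  rw [ENNReal.toReal_sub_of_le (prob_le_one) ENNReal.one_ne_top]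
  rw [ENNReal.toReal_one, hopen w]

include hmeas hopen in
lemma prob_val (hp : p₀ ∈ Set.Ioo (0:ℝ) 1) (w : V) (b : Bool) :
    (P {ω | η ω w = b}).toReal = if b then p₀ else 1 - p₀ := by
  cases b
  · simpa using prob_false (P := P) (η := η) (p₀ := p₀) hmeas hopen hp w
  · simpa using hopen w

include hindep in
lemma prob_fiber (g : V → Bool) :
    (P {ω | (fun w => η ω w) = g}).toReal = ∏ w, (P {ω | η ω w = g w}).toReal := by
  have h1 : {ω | (fun w => η ω w) = g} = ⋂ w, {ω | η ω w = g w} := by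
    ext ω
    simp only [Set.mem_setOf_eq, Set.mem_iInter, funext_iff]
  rw [h1, hindep.meas_iInter, ENNReal.toReal_prod]
  intro w
  exact ⟨{g w}, trivial, rfl⟩

include hmeas hindep hopen in
lemma prob_cond_eq_sum (hp : p₀ ∈ Set.Ioo (0:ℝ) 1) (COND : (V → Bool) → Prop)
    [DecidablePred COND] :
    (P {ω | COND (fun w => η ω w)}).toReal
      = ∑ g ∈ Finset.univ.filter COND, pw p₀ g := by
  have hE : {ω | COND (fun w => η ω w)}
      = ⋃ g ∈ Finset.univ.filter COND, {ω | (fun w => η ω w) = g} := by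
    ext ω
    simp only [Set.mem_setOf_eq, Set.mem_iUnion, Finset.mem_filter, Finset.mem_univ, true_and]
    constructor
    · intro h; exact ⟨fun w => η ω w, h, rfl⟩
    · rintro ⟨g, hg, h⟩; rwa [h]
  have hmeasg : ∀ g : V → Bool, MeasurableSet {ω | (fun w => η ω w) = g} := by
    intro g
    have : {ω | (fun w => η ω w) = g} = ⋂ w, {ω | η ω w = g w} := by
      ext ω; simp only [Set.mem_setOf_eq, Set.mem_iInter, funext_iff]
    rw [this]
    exact MeasurableSet.iInter fun w => meas_eval (η := η) hmeas w (g w)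
  rw [hE, measure_biUnion_finset ?_ (fun g _ => hmeasg g)]
  · rw [ENNReal.toReal_sum (fun g _ => measure_ne_top P _)]
    refine Finset.sum_congr rfl fun g hg => ?_
    rw [prob_fiber (P := P) (η := η) hindep g, pw]
    exact Finset.prod_congr rfl fun w _ => prob_val (P := P) (η := η) (p₀ := p₀) hmeas hopen hp w (g w)
  · intro g hg g' hg' hne
    simp only [Function.onFun]
    apply Set.disjoint_left.mpr
    intro ω h1 h2
    exact hne (h1.symm.trans h2)

end PercoAux

/-- **Exponential tail for the percolation cluster of an edge.**
In Bernoulli(`p₀`) site percolation on a graph of maximal degree `Δ`, with the two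
endpoints of an edge `(u,v)` forced open, the open cluster `C(u,v)` containing `{u,v}`
satisfies, for every `m ≥ 2`,
`P(|C(u,v)| ≥ m) ≤ (2/(1−e^{−ξ_*}))·((1−p₀)/(p₀(Δ−2)))²·e^{−ξ_* m}`,
where `ξ_* = log((Δ−2)^{Δ−2}/(p₀(Δ−1)^{Δ−1}(1−p₀)^{Δ−2}))`. -/
theorem percolation_cluster_tail {V : Type*} [Fintype V] [DecidableEq V]
    (G : SimpleGraph V) [DecidableRel G.Adj] (Δ : ℕ) (hΔ : 3 ≤ Δ)
    (hdeg : ∀ w, G.degree w ≤ Δ)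
    (p₀ : ℝ) (hp : p₀ ∈ Set.Ioo (0:ℝ) 1) (hsub : p₀ * ((Δ : ℝ) - 1) < 1)
    (u v : V) (huv : G.Adj u v)
    {Ω : Type*} [MeasurableSpace Ω] (P : Measure Ω) [IsProbabilityMeasure P]
    (η : Ω → V → Bool) (hmeas : ∀ w, Measurable (fun ω => η ω w))
    (hindep : iIndepFun (fun w ω => η ω w) P)
    (hopen : ∀ w, (P {ω | η ω w = true}).toReal = p₀)
    (ξstar : ℝ)
    (hξstar : ξstar = Real.log (((Δ : ℝ) - 2) ^ (Δ - 2)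
      / (p₀ * ((Δ : ℝ) - 1) ^ (Δ - 1) * (1 - p₀) ^ (Δ - 2))))
    (m : ℕ) (hm : 2 ≤ m) :
    (P {ω | m ≤ Set.ncard (openCluster G
        (Function.update (Function.update (η ω) u true) v true) u)}).toReal
      ≤ (2 / (1 - Real.exp (-ξstar))) * ((1 - p₀) / (p₀ * ((Δ : ℝ) - 2))) ^ 2
          * Real.exp (-ξstar * m) := by
  classical
  obtain ⟨hp0, hp1⟩ := hp
  have huvne : u ≠ v := G.ne_of_adj huv
  set D : ℝ := (Δ : ℝ) with hD
  have hD3 : (3:ℝ) ≤ D := by rw [hD]; exact_mod_cast hΔ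
  -- numbered reals
  set x : ℝ := (1 - p₀) / (p₀ * (D - 2)) with hxdef
  set r : ℝ := Real.exp (-ξstar) with hrdef
  have hq0 : (0:ℝ) < 1 - p₀ := by linarith
  have hD2 : (0:ℝ) < D - 2 := by linarith
  have hD1 : (0:ℝ) < D - 1 := by linarith
  -- key positivity/value facts
  have hA0 : (0:ℝ) < (D - 2) ^ (Δ - 2) / (p₀ * (D - 1) ^ (Δ - 1) * (1 - p₀) ^ (Δ - 2)) := by
    positivity
  have hr_eq : r = p₀ * (D - 1) ^ (Δ - 1) * (1 - p₀) ^ (Δ - 2) / (D - 2) ^ (Δ - 2) := by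
    rw [hrdef, hξstar, Real.exp_neg, Real.exp_log hA0]
    rw [inv_div]
  have hr0 : (0:ℝ) < r := Real.exp_pos _
  have hx1 : 1 ≤ x := by
    rw [hxdef, le_div_iff₀ (by positivity)]
    nlinarith
  have hx0 : (0:ℝ) < x := by rw [hxdef]; positivity
  -- Δ = k + 3
  obtain ⟨k, hk⟩ : ∃ k, Δ = k + 3 := ⟨Δ - 3, by omega⟩
  have hΔ1 : Δ - 1 = k + 2 := by omega
  have hΔ2 : Δ - 2 = k + 1 := by omega
  -- x * r = c ^ (Δ-1) with c := (1-p₀)*(D-1)/(D-2)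
  set c : ℝ := (1 - p₀) * (D - 1) / (D - 2) with hcdef
  have hc1 : 1 ≤ c := by
    rw [hcdef, le_div_iff₀ hD2]
    nlinarith
  have hxr : x * r = c ^ (Δ - 1) := by
    have hc2 : c^(k+2) = ((1-p₀)^(k+2) * (D-1)^(k+2)) / (D-2)^(k+2) := by
      rw [hcdef, div_pow, mul_pow]
    rw [hr_eq, hxdef, hΔ1, hΔ2, hc2, pow_succ (1-p₀) (k+1), pow_succ (D-2) (k+1)]
    field_simp
  have hxr1 : 1 ≤ x * r := hxr ▸ one_le_pow₀ hc1
  -- r < 1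
  have hr1 : r < 1 := by
    set s : ℝ := p₀ * (D - 1) with hsdef
    have hs0 : 0 < s := by positivity
    have hs1 : s < 1 := hsub
    have hb : c = 1 + (1 - s) / (D - 2) := by
      rw [hcdef, hsdef]; field_simp; ring
    have hble : c ≤ Real.exp ((1 - s) / (D - 2)) := by
      rw [hb]
      have := Real.add_one_le_exp ((1 - s) / (D - 2))
      linarith
    have hc0 : (0:ℝ) ≤ c := by linarith
    have hpow : c ^ (Δ - 2) ≤ Real.exp ((1 - s) / (D - 2)) ^ (Δ - 2) :=
      pow_le_pow_left₀ hc0 hble _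
    have hcast : ((Δ - 2 : ℕ) : ℝ) = D - 2 := by
      rw [hΔ2, hD, hk]; push_cast; ring
    have hexp : Real.exp ((1 - s) / (D - 2)) ^ (Δ - 2) = Real.exp (1 - s) := by
      rw [← Real.exp_nat_mul, hcast]
      congr 1
      field_simp
    have hrs : r = s * c ^ (Δ - 2) := by
      have hc2 : c^(k+1) = ((1-p₀)^(k+1) * (D-1)^(k+1)) / (D-2)^(k+1) := by
        rw [hcdef, div_pow, mul_pow]
      rw [hr_eq, hsdef, hΔ1, hΔ2, hc2, pow_succ (D-1) (k+1)]
      field_simp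
    have hlog : Real.log s < s - 1 := Real.log_lt_sub_one_of_pos hs0 (by linarith)
    have hexp2 : Real.exp (1 - s) < s⁻¹ := by
      have h1 : 1 - s < -Real.log s := by linarith
      have := Real.exp_lt_exp.mpr h1
      rwa [Real.exp_neg, Real.exp_log hs0] at this
    calc r = s * c ^ (Δ - 2) := hrs
      _ ≤ s * Real.exp (1 - s) := by
          refine mul_le_mul_of_nonneg_left ?_ (le_of_lt hs0)
          rw [← hexp]; exact hpow
      _ < s * s⁻¹ := by exact mul_lt_mul_of_pos_left hexp2 hs0
      _ = 1 := by field_simp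
  -- the condition
  set COND : (V → Bool) → Prop := fun g =>
    m ≤ Set.ncard (openCluster G (Function.update (Function.update g u true) v true) u)
    with hCOND
  have hset : {ω | m ≤ Set.ncard (openCluster G
        (Function.update (Function.update (η ω) u true) v true) u)}
      = {ω | COND (fun w => η ω w)} := rfl
  rw [hset, prob_cond_eq_sum P η p₀ hmeas hindep hopen ⟨hp0, hp1⟩ COND]
  -- sum of weights is 1
  have hsum1 : ∑ g : V → Bool, pw p₀ g = 1 := by
    have h := prob_cond_eq_sum P η p₀ hmeas hindep hopen ⟨hp0, hp1⟩ (fun _ => True)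
    simp only [Set.setOf_true, measure_univ, ENNReal.toReal_one, Finset.filter_true] at h
    exact h.symm
  have hpw_nonneg : ∀ g : V → Bool, 0 ≤ pw p₀ g := by
    intro g
    refine Finset.prod_nonneg fun w _ => ?_
    split <;> linarith
  -- parameters
  set M : ℕ := (Δ - 1) * (m - 1) with hM
  set t : ℕ := m - 2 with ht
  set ag₀ : List V := (G.neighborFinset u).toList ++ (G.neighborFinset v).toList with hag
  set sn₀ : Finset V := {u, v} with hsn
  have husn : u ∈ sn₀ := by simp [hsn]
  have hvsn : v ∈ sn₀ := by simp [hsn]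
  -- COND implies accepted
  have haccept : ∀ g : V → Bool, COND g →
      expl G M t ag₀ sn₀ (hatf u v g) = true := by
    intro g hg
    set ηh : V → Bool := hatf u v g with hηh
    have hηu : ηh u = true := by
      rw [hηh, hatf, Function.update_of_ne huvne, Function.update_self]
    have hηv : ηh v = true := by rw [hηh, hatf, Function.update_self]
    have hcard : m ≤ ((Set.toFinite (openCluster G ηh u)).toFinset).card := by
      rw [← Set.ncard_eq_toFinset_card]
      exact hg
    have hHadj : (HG G ηh).Adj u v := by
      rw [SimpleGraph.fromRel_adj]
      exact ⟨huvne, Or.inl ⟨huv, hηu, hηv⟩⟩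
    have hvnb : v ∈ G.neighborFinset u := by
      rw [SimpleGraph.mem_neighborFinset]; exact huv
    have hunb : u ∈ G.neighborFinset v := by
      rw [SimpleGraph.mem_neighborFinset]; exact huv.symm
    have hlenu : ((G.neighborFinset u).toList.filter (fun z => z ∉ sn₀)).length ≤ Δ - 1 := by
      rw [filter_toList_length]
      have hsub : (G.neighborFinset u).filter (fun z => z ∉ sn₀)
          ⊆ (G.neighborFinset u).erase v := by
        intro z hz
        rw [Finset.mem_filter] at hz
        refine Finset.mem_erase.mpr ⟨?_, hz.1⟩
        rintro rfl
        exact hz.2 hvsn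
      calc ((G.neighborFinset u).filter (fun z => z ∉ sn₀)).card
          ≤ ((G.neighborFinset u).erase v).card := Finset.card_le_card hsub
        _ = G.degree u - 1 := by
            rw [Finset.card_erase_of_mem hvnb, SimpleGraph.card_neighborFinset_eq_degree]
        _ ≤ Δ - 1 := Nat.sub_le_sub_right (hdeg u) 1
    have hlenv : ((G.neighborFinset v).toList.filter (fun z => z ∉ sn₀)).length ≤ Δ - 1 := by
      rw [filter_toList_length]
      have hsub : (G.neighborFinset v).filter (fun z => z ∉ sn₀)
          ⊆ (G.neighborFinset v).erase u := by
        intro z hz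
        rw [Finset.mem_filter] at hz
        refine Finset.mem_erase.mpr ⟨?_, hz.1⟩
        rintro rfl
        exact hz.2 husn
      calc ((G.neighborFinset v).filter (fun z => z ∉ sn₀)).card
          ≤ ((G.neighborFinset v).erase u).card := Finset.card_le_card hsub
        _ = G.degree v - 1 := by
            rw [Finset.card_erase_of_mem hunb, SimpleGraph.card_neighborFinset_eq_degree]
        _ ≤ Δ - 1 := Nat.sub_le_sub_right (hdeg v) 1
    refine expl_correct G Δ hdeg ηh u v hηu hηv M t ag₀ sn₀ husn hvsn ?_ ?_ ?_ ?_ ?_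
    · -- (A)
      rcases Nat.eq_or_lt_of_le hm with h2 | h3
      · exact Or.inl (by omega)
      · refine Or.inr ?_
        obtain ⟨l, hl⟩ : ∃ l, m = l + 3 := ⟨m - 3, by omega⟩
        have htl : t - 1 = l := by omega
        have hml : m - 1 = l + 2 := by omega
        rw [htl, hM, hml, hag, List.filter_append, List.length_append]
        have hmul : (Δ-1)*(l+2) = (Δ-1)*l + ((Δ-1) + (Δ-1)) := by ring
        omega
    · -- (B)
      have h1 := Finset.card_le_card_sdiff_add_card
        (s := (Set.toFinite (openCluster G ηh u)).toFinset) (t := sn₀)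
      have h2 : sn₀.card ≤ 2 := by
        rw [hsn]
        apply le_trans (Finset.card_insert_le u {v})
        simp
      omega
    · -- (C)
      intro w hw hwsn
      rw [Set.Finite.mem_toFinset] at hw
      obtain ⟨Q⟩ := hw
      obtain ⟨y, Q', hQ', hcert⟩ := walk_avoid G Q sn₀ hwsn
      rcases hcert with ⟨rfl, hus⟩ | ⟨x'', hx''m, hadj⟩
      · exact absurd husn hus
      · have hysn : y ∉ sn₀ := hQ' y Q'.start_mem_support
        have hx''uv : x'' = u ∨ x'' = v := by
          rw [hsn] at hx''m
          simpa using hx''m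
        rcases hx''uv with rfl | rfl
        · have : y ∈ (G.neighborFinset x'').toList := by
            rw [Finset.mem_toList, SimpleGraph.mem_neighborFinset]
            exact (HG_adj G hadj).1
          exact ⟨y, List.mem_append_left _ this, hysn, Q', hQ'⟩
        · have : y ∈ (G.neighborFinset x'').toList := by
            rw [Finset.mem_toList, SimpleGraph.mem_neighborFinset]
            exact (HG_adj G hadj).1
          exact ⟨y, List.mem_append_right _ this, hysn, Q', hQ'⟩
    · -- (D)
      intro z hz
      rcases List.mem_append.mp hz with h | h
      · rw [Finset.mem_toList, SimpleGraph.mem_neighborFinset] at h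
        exact ⟨u, husn, h⟩
      · rw [Finset.mem_toList, SimpleGraph.mem_neighborFinset] at h
        exact ⟨v, hvsn, h⟩
    · -- (F)
      intro s' hs' hηs' y hy
      have hs'uv : s' = u ∨ s' = v := by
        rw [hsn] at hs'
        simpa using hs'
      rcases hs'uv with rfl | rfl
      · refine Or.inr (List.mem_append_left _ ?_)
        rw [Finset.mem_toList, SimpleGraph.mem_neighborFinset]
        exact hy
      · refine Or.inr (List.mem_append_right _ ?_)
        rw [Finset.mem_toList, SimpleGraph.mem_neighborFinset]
        exact hy
  -- chain
  have step1 : ∑ g ∈ Finset.univ.filter COND, pw p₀ g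
      ≤ ∑ g : V → Bool, pw p₀ g * (if expl G M t ag₀ sn₀ (hatf u v g) = true then 1 else 0) := by
    rw [Finset.sum_filter]
    refine Finset.sum_le_sum fun g _ => ?_
    by_cases hg : COND g
    · rw [if_pos hg, haccept g hg, if_pos rfl, mul_one]
    · rw [if_neg hg]
      by_cases he : expl G M t ag₀ sn₀ (hatf u v g) = true
      · rw [if_pos he, mul_one]; exact hpw_nonneg g
      · rw [if_neg he, mul_zero]
  have step2 := sum_expl_le G p₀ (le_of_lt hp0) (le_of_lt hp1) u v hsum1 M t ag₀ sn₀ husn hvsn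
  have step3 := bt_le_chernoff (le_of_lt hp0) (le_of_lt hp1) hx1 M t
  -- final algebra
  have hqpx : 1 - p₀ + p₀ * x = c := by
    rw [hxdef, hcdef]; field_simp; ring
  obtain ⟨j, hj⟩ : ∃ j, m = j + 2 := ⟨m - 2, by omega⟩
  have htj : t = j := by omega
  have hmj : m - 1 = j + 1 := by omega
  have hchern : (1/x)^t * (1 - p₀ + p₀ * x)^M = x * r^(j+1) := by
    rw [hqpx, hM, hmj, htj, pow_mul, ← hxr, mul_pow, pow_succ]
    rw [one_div, inv_pow]
    field_simp
  have hrm : Real.exp (-ξstar * (m:ℝ)) = r ^ m := by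
    rw [hrdef, ← Real.exp_nat_mul]
    congr 1
    ring
  rw [hrm]
  have hgoal : x * r^(j+1) ≤ 2 / (1 - r) * ((1 - p₀) / (p₀ * (D - 2))) ^ 2 * r ^ m := by
    have hx2 : ((1 - p₀) / (p₀ * (D - 2))) ^ 2 = x^2 := by rw [hxdef]
    rw [hx2]
    have h2 : 2 / (1 - r) * x ^ 2 * r ^ m = (2 * x^2 * r^m) / (1 - r) := by ring
    rw [h2, le_div_iff₀ (by linarith)]
    have hrm2 : r ^ m = r^(j+1) * r := by rw [hj]; ring
    have hkey : 1 - r ≤ 2 * (x * r) := by linarith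
    have hpos : 0 ≤ x * r^(j+1) := by positivity
    calc x * r^(j+1) * (1 - r) ≤ x * r^(j+1) * (2 * (x * r)) := by
          exact mul_le_mul_of_nonneg_left hkey hpos
      _ = 2 * x^2 * r^m := by rw [hrm2]; ring
  calc ∑ g ∈ Finset.univ.filter COND, pw p₀ g
      ≤ bt p₀ M t := le_trans step1 step2
    _ ≤ (1/x)^t * (1 - p₀ + p₀ * x)^M := step3
    _ = x * r^(j+1) := hchern
    _ ≤ _ := hgoal
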